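/- There exists exactly one formal power series S in R satisfying S = 1 + Σ_{n≥1} t_n·S^n (where the sum is the tsum of the summable family (t_n·S^n)_{n≥1} in the product topology). -/

import Mathlib

/- `R = MvPowerSeries ℕ ℚ`, with the product (coefficientwise) topology. -/
noncomputable instance : TopologicalSpace (MvPowerSeries ℕ ℚ) :=
  inferInstanceAs (TopologicalSpace ((ℕ →₀ ℕ) → ℚ))

open MvPowerSeries

namespace Geode

abbrev R := MvPowerSeries ℕ ℚ

/-- total degree (weight) of a monomial -/
def wt (d : ℕ →₀ ℕ) : ℕ := d.sum fun _ n => n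

lemma wt_mono {a b : ℕ →₀ ℕ} (h : a ≤ b) : wt a ≤ wt b := by
  obtain ⟨c, rfl⟩ := le_iff_exists_add.mp h
  unfold wt
  rw [Finsupp.sum_add_index (by simp) (by intros; rfl)]
  exact Nat.le_add_right _ _

lemma wt_sub_single_lt {d : ℕ →₀ ℕ} {j : ℕ} (h : Finsupp.single j 1 ≤ d) :
    wt (d - Finsupp.single j 1) < wt d := by
  have hd : d = (d - Finsupp.single j 1) + Finsupp.single j 1 := by
    ext i
    have := Finsupp.le_def.mp h i
    simp only [Finsupp.add_apply, Finsupp.tsub_apply]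
    omega
  conv_rhs => rw [hd]
  unfold wt
  rw [Finsupp.sum_add_index (by simp) (by intros; rfl)]
  simp [Finsupp.sum_single_index]

lemma coeff_pow_congr {A B : R} {e : ℕ →₀ ℕ}
    (h : ∀ e' ≤ e, (coeff e') A = (coeff e') B) (k : ℕ) :
    coeff e (A ^ k) = coeff e (B ^ k) := by
  induction k generalizing e with
  | zero => simp
  | succ k ih =>
    rw [pow_succ, pow_succ, coeff_mul, coeff_mul]
    refine Finset.sum_congr rfl fun p hp => ?_
    replace hp : p.1 + p.2 = e := Finset.HasAntidiagonal.mem_antidiagonal.mp hp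
    have h1 : p.1 ≤ e := le_iff_exists_add.mpr ⟨p.2, hp.symm⟩
    have h2 : p.2 ≤ e := le_iff_exists_add.mpr ⟨p.1, by rw [← hp, add_comm]⟩
    rw [ih (fun e' he' => h e' (he'.trans h1)), h p.2 h2]

/-- The sum `∑_{n≥1} t_n A^n`, defined coefficientwise. -/
noncomputable def F (A : R) : R :=
  fun d => ∑ n ∈ Finset.range (d.support.sup id), coeff d (X (n + 1) * A ^ (n + 1))

lemma coeff_F (A : R) (d : ℕ →₀ ℕ) :
    coeff d (F A) =
      ∑ n ∈ Finset.range (d.support.sup id), coeff d (X (n + 1) * A ^ (n + 1)) := rfl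

lemma coeff_term_eq_zero {A : R} {d : ℕ →₀ ℕ} {n : ℕ}
    (hn : n ∉ Finset.range (d.support.sup id)) :
    coeff d (X (n + 1) * A ^ (n + 1)) = 0 := by
  rw [X_def, coeff_monomial_mul, if_neg, ]
  intro hle
  have h1 : d (n + 1) ≠ 0 := by
    have := Finsupp.le_def.mp hle (n + 1)
    simp only [Finsupp.single_eq_same] at this
    omega
  have hmem : n + 1 ∈ d.support := Finsupp.mem_support_iff.mpr h1
  have := Finset.le_sup (f := id) hmem
  simp only [id] at this
  simp only [Finset.mem_range, not_lt] at hn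
  omega

lemma hasSum_F (A : R) :
    HasSum (fun n : ℕ => (X (n + 1) : R) * A ^ (n + 1)) (F A) := by
  exact Pi.hasSum.mpr fun d => hasSum_sum_of_ne_finset_zero fun n hn => coeff_term_eq_zero hn

noncomputable def Phi (A : R) : R := 1 + F A

lemma Phi_eq (A : R) :
    Phi A = 1 + ∑' n : ℕ, (X (n + 1) : R) * A ^ (n + 1) := by
  have : T2Space R := inferInstanceAs (T2Space ((ℕ →₀ ℕ) → ℚ))
  rw [(hasSum_F A).tsum_eq]
  rfl

lemma coeff_Phi_congr {A B : R} {m : ℕ}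
    (h : ∀ e, wt e < m → coeff e A = coeff e B)
    {d : ℕ →₀ ℕ} (hd : wt d ≤ m) :
    coeff d (Phi A) = coeff d (Phi B) := by
  unfold Phi
  simp only [map_add, coeff_F]
  congr 1
  refine Finset.sum_congr rfl fun n _ => ?_
  rw [X_def, coeff_monomial_mul, coeff_monomial_mul]
  split_ifs with hle
  · congr 1
    refine coeff_pow_congr (fun e' he' => h e' ?_) _
    have := (wt_mono he').trans_lt (wt_sub_single_lt hle)
    omega
  · rfl

lemma stab1 : ∀ l, ∀ d : ℕ →₀ ℕ, wt d < l →
    coeff d (Phi^[l] 0) = coeff d (Phi^[l + 1] 0) := by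
  intro l
  induction l with
  | zero => intro d hd; omega
  | succ l ih =>
    intro d hd
    rw [Function.iterate_succ_apply' Phi l 0,
        Function.iterate_succ_apply' Phi (l + 1) 0]
    exact coeff_Phi_congr (fun e he => ih e he) (Nat.lt_succ_iff.mp hd)

lemma stab : ∀ k l, k ≤ l → ∀ d : ℕ →₀ ℕ, wt d < k →
    coeff d (Phi^[k] 0) = coeff d (Phi^[l] 0) := by
  intro k l hkl
  induction l with
  | zero => intro d hd; interval_cases k; omega
  | succ l ih =>
    rcases Nat.eq_or_lt_of_le hkl with rfl | hlt
    · intro d hd; rfl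
    · intro d hd
      have hkl' : k ≤ l := Nat.lt_succ_iff.mp hlt
      rw [ih hkl' d hd]
      exact stab1 l d (lt_of_lt_of_le hd hkl')

/-- The fixed point, defined coefficientwise as the stable value. -/
noncomputable def S : R := fun d => coeff d (Phi^[wt d + 1] 0)

lemma coeff_S (d : ℕ →₀ ℕ) : coeff d S = coeff d (Phi^[wt d + 1] 0) := rfl

lemma S_agree {k : ℕ} {d : ℕ →₀ ℕ} (h : wt d < k) :
    coeff d S = coeff d (Phi^[k] 0) := by
  rw [coeff_S]
  rcases le_or_gt (wt d + 1) k with hle | hlt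
  · exact stab _ _ hle d (Nat.lt_succ_self _)
  · exact (stab k (wt d + 1) hlt.le d h).symm

lemma S_fixed : S = Phi S := by
  ext d
  have h1 : coeff d (Phi S) = coeff d (Phi (Phi^[wt d] 0)) :=
    coeff_Phi_congr (fun e he => S_agree he) le_rfl
  rw [h1, ← Function.iterate_succ_apply' Phi (wt d) 0, ← coeff_S]

lemma unique_fixed {T : R} (hT : T = Phi T) : T = S := by
  ext d
  suffices h : ∀ m, ∀ d : ℕ →₀ ℕ, wt d < m → coeff d T = coeff d S from
    h (wt d + 1) d (Nat.lt_succ_self _)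
  intro m
  induction m using Nat.strong_induction_on with
  | _ m ih =>
    intro d hd
    rw [hT, S_fixed]
    exact coeff_Phi_congr (fun e he => ih (wt d) hd e he) le_rfl

end Geode

theorem geode_stmt0 :
    ∃! S : MvPowerSeries ℕ ℚ,
      S = 1 + ∑' n : ℕ, (X (n + 1) : MvPowerSeries ℕ ℚ) * S ^ (n + 1) := by
  refine ⟨Geode.S, ?_, ?_⟩
  · show Geode.S = 1 + ∑' n : ℕ, (X (n + 1) : MvPowerSeries ℕ ℚ) * Geode.S ^ (n + 1)
    rw [← Geode.Phi_eq]
    exact Geode.S_fixed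
  · intro T hT
    exact Geode.unique_fixed (by rw [← Geode.Phi_eq] at hT; exact hT)
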